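/- arXiv:2502.17047 — 4 statements merged into one kernel-verified Lean document; each statement's English description precedes it below -/
import Mathlib

section
/- Let x(n) = Σ_{i=1}^M b_i z_i^n with pairwise distinct poles z_i and nonzero amplitudes b_i, let M ≤ L ≤ N−M, and form the Hankel matrices X_0, X_1 ∈ ℂ^{(N−L)×L} with X_0(n,l) = x(n+l), X_1(n,l) = x(n+l+1). Assume Z_R Z_R^H is invertible and set Z_R^† = Z_R^H (Z_R Z_R^H)^{−1}. Then for every 1 ≤ i ≤ M, the i-th column q_i of Z_R^† satisfies (X_1 − z_i X_0) q_i = 0. -/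
open Matrix

/-- (Right-eigenvector assertion of the noiseless Matrix Pencil theorem.)
For the noiseless Hankel matrices `X₀`, `X₁` of `x(n) = Σᵢ bᵢ zᵢⁿ`, the `i`-th column `qᵢ` of
`Z_R^† = Z_Rᴴ (Z_R Z_Rᴴ)⁻¹` satisfies `(X₁ - zᵢ X₀) qᵢ = 0`. -/
theorem matrix_pencil_right_eigenvectors
    (N L M : ℕ) (hML : M ≤ L) (hLN : L ≤ N - M)
    (z b : Fin M → ℂ) (hz : Function.Injective z) (hb : ∀ i, b i ≠ 0)
    (x : ℕ → ℂ) (hx : ∀ n, x n = ∑ i, b i * z i ^ n)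
    (X0 X1 : Matrix (Fin (N - L)) (Fin L) ℂ)
    (hX0 : ∀ n l, X0 n l = x (n.1 + l.1))
    (hX1 : ∀ n l, X1 n l = x (n.1 + l.1 + 1))
    (ZR : Matrix (Fin M) (Fin L) ℂ) (hZR : ∀ i l, ZR i l = z i ^ l.1)
    (hinv : IsUnit (ZR * ZR.conjTranspose)) :
    ∀ i : Fin M,
      (X1 - z i • X0).mulVec
        (fun l => (ZR.conjTranspose * (ZR * ZR.conjTranspose)⁻¹) l i) = 0 := by
  intro i
  set q : Fin L → ℂ := fun l => (ZR.conjTranspose * (ZR * ZR.conjTranspose)⁻¹) l i with hq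
  -- pseudo-inverse property: ZR.mulVec q = Pi.single i 1
  have hdet : IsUnit (ZR * ZR.conjTranspose).det :=
    (Matrix.isUnit_iff_isUnit_det _).mp hinv
  have hZq : ZR.mulVec q = fun j => (1 : Matrix (Fin M) (Fin M) ℂ) j i := by
    funext j
    have : ZR.mulVec q j = (ZR * (ZR.conjTranspose * (ZR * ZR.conjTranspose)⁻¹)) j i := by
      simp [Matrix.mulVec, Matrix.mul_apply, dotProduct, hq]
    rw [this, ← Matrix.mul_assoc, Matrix.mul_nonsing_inv _ hdet]
  -- factorization: X1 - z i • X0 = P * ZR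
  set P : Matrix (Fin (N - L)) (Fin M) ℂ :=
    fun n j => b j * (z j - z i) * z j ^ n.1 with hP
  have hfact : X1 - z i • X0 = P * ZR := by
    ext n l
    simp only [Matrix.sub_apply, Matrix.smul_apply, hX0, hX1, hx, Matrix.mul_apply, hP, hZR,
      smul_eq_mul, Finset.mul_sum, ← Finset.sum_sub_distrib]
    apply Finset.sum_congr rfl
    intro j _
    rw [pow_add, pow_add, pow_succ]
    simp only [hZR]
    ring
  rw [hfact, ← Matrix.mulVec_mulVec, hZq]
  funext n
  simp [Matrix.mulVec, dotProduct, Matrix.one_apply, hP]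
end

section
/- Let x(n) = Σ_{i=1}^M b_i z_i^n with pairwise distinct poles z_i and nonzero amplitudes b_i, let M ≤ L ≤ N−M, and form the Hankel matrices X_0, X_1 ∈ ℂ^{(N−L)×L} with X_0(n,l) = x(n+l), X_1(n,l) = x(n+l+1). Assume Z_L^H Z_L is invertible and set Z_L^† = (Z_L^H Z_L)^{−1} Z_L^H. Then for every 1 ≤ i ≤ M, the i-th row p_i^H of Z_L^† satisfies p_i^H (X_1 − z_i X_0) = 0. -/
open Matrix

/-- (Left-eigenvector assertion of the noiseless Matrix Pencil theorem.)
For the noiseless Hankel matrices `X₀`, `X₁` of `x(n) = Σᵢ bᵢ zᵢⁿ`, the `i`-th row `pᵢᴴ` of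
`Z_L^† = (Z_Lᴴ Z_L)⁻¹ Z_Lᴴ` satisfies `pᵢᴴ (X₁ - zᵢ X₀) = 0`. -/
theorem matrix_pencil_left_eigenvectors
    (N L M : ℕ) (hML : M ≤ L) (hLN : L ≤ N - M)
    (z b : Fin M → ℂ) (hz : Function.Injective z) (hb : ∀ i, b i ≠ 0)
    (x : ℕ → ℂ) (hx : ∀ n, x n = ∑ i, b i * z i ^ n)
    (X0 X1 : Matrix (Fin (N - L)) (Fin L) ℂ)
    (hX0 : ∀ n l, X0 n l = x (n.1 + l.1))
    (hX1 : ∀ n l, X1 n l = x (n.1 + l.1 + 1))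
    (ZL : Matrix (Fin (N - L)) (Fin M) ℂ) (hZL : ∀ n i, ZL n i = z i ^ n.1)
    (hinv : IsUnit (ZL.conjTranspose * ZL)) :
    ∀ i : Fin M,
      Matrix.vecMul
        (fun n => ((ZL.conjTranspose * ZL)⁻¹ * ZL.conjTranspose) i n)
        (X1 - z i • X0) = 0 := by
  intro i
  set P : Matrix (Fin M) (Fin (N - L)) ℂ :=
    (ZL.conjTranspose * ZL)⁻¹ * ZL.conjTranspose with hPdef
  have hP : P * ZL = 1 := by
    rw [hPdef, Matrix.mul_assoc,
      Matrix.nonsing_inv_mul _ ((Matrix.isUnit_iff_isUnit_det _).mp hinv)]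
  set C : Matrix (Fin M) (Fin L) ℂ :=
    fun j l => b j * (z j - z i) * z j ^ l.1 with hCdef
  have hfac : X1 - z i • X0 = ZL * C := by
    ext n l
    simp only [Matrix.sub_apply, Matrix.smul_apply, Matrix.mul_apply, hX1, hX0, hx,
      hZL, hCdef, smul_eq_mul]
    rw [Finset.mul_sum, ← Finset.sum_sub_distrib]
    apply Finset.sum_congr rfl
    intro j _
    simp only [hZL]
    ring
  have hrow : (fun n => ((ZL.conjTranspose * ZL)⁻¹ * ZL.conjTranspose) i n) = P i := rfl
  rw [hrow, hfac, ← Matrix.vecMul_vecMul]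
  have h1 : ZL.vecMul (P i) = (1 : Matrix (Fin M) (Fin M) ℂ) i := by
    funext j
    have : (P * ZL) i j = (1 : Matrix (Fin M) (Fin M) ℂ) i j := by rw [hP]
    simpa [Matrix.mul_apply, Matrix.vecMul, dotProduct] using this
  rw [h1]
  funext l
  simp [Matrix.vecMul, dotProduct, Matrix.one_apply, hCdef]
end

section
/- Let A ∈ ℂ^{n×n} be non-defective with right eigenvector basis v_1,…,v_n (columns of the invertible matrix V, A V = V Λ₀ with Λ₀ = diag(λ_1,…,λ_n)) and left eigenvectors u_1,…,u_n (rows of U^H, U^H A = Λ₀ U^H) satisfying u_k^H v_j = c_k δ_{kj} with c_k ≠ 0. Let λ_i be simple, and suppose (A + δA) ṽ_i = λ̃_i ṽ_i, where ṽ_i = v_i + Σ_{k≠i} a_k v_k and λ̃_i ≠ λ_k for all k ≠ i. Let D_i = diag(1/(c_1(λ̃_i−λ_1)), …, 0_i, …, 1/(c_n(λ̃_i−λ_n))) (with i-th diagonal entry 0), and let a ∈ ℂ^n be the coefficient vector with entries a_k (and a_i = 0). Then (I − D_i U^H δA V) a = D_i U^H δA v_i; moreover, if the spectral radius ρ(D_i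 U^H δA V) < 1, then I − D_i U^H δA V is invertible and a = (I − D_i U^H δA V)^{−1} D_i U^H δA v_i. -/
open Matrix

/-- (Paper's Lemma 1, exact form.) The coefficient vector `a` of the
eigenvector perturbation of a simple eigenvalue of a non-defective matrix satisfies
`(I - Dᵢ Uᴴ δA V) a = Dᵢ Uᴴ δA vᵢ`; and if `ρ(Dᵢ Uᴴ δA V) < 1` then `I - Dᵢ Uᴴ δA V` is
invertible and `a = (I - Dᵢ Uᴴ δA V)⁻¹ Dᵢ Uᴴ δA vᵢ`. -/
theorem eigenvector_perturbation_linear_system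
    (n : ℕ) (A δA : Matrix (Fin n) (Fin n) ℂ)
    (V U : Matrix (Fin n) (Fin n) ℂ) (lam c : Fin n → ℂ)
    (hV : IsUnit V)
    (hAV : A * V = V * Matrix.diagonal lam)
    (hUA : U.conjTranspose * A = Matrix.diagonal lam * U.conjTranspose)
    (hbiorth : U.conjTranspose * V = Matrix.diagonal c)
    (hc : ∀ k, c k ≠ 0)
    (i : Fin n) (hsimple : ∀ k, k ≠ i → lam k ≠ lam i)
    (lamt : ℂ) (hlamt : ∀ k, k ≠ i → lamt ≠ lam k)
    (a : Fin n → ℂ) (hai : a i = 0)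
    (vt : Fin n → ℂ) (hvt : vt = (fun j => V j i) + V.mulVec a)
    (heig : (A + δA).mulVec vt = lamt • vt)
    (Di : Matrix (Fin n) (Fin n) ℂ)
    (hDi : Di = Matrix.diagonal (fun k => if k = i then 0 else (c k * (lamt - lam k))⁻¹)) :
    (1 - Di * U.conjTranspose * δA * V).mulVec a
        = (Di * U.conjTranspose * δA).mulVec (fun j => V j i) ∧
    (spectralRadius ℂ (Di * U.conjTranspose * δA * V) < 1 →
      IsUnit (1 - Di * U.conjTranspose * δA * V) ∧
      a = (1 - Di * U.conjTranspose * δA * V)⁻¹.mulVec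
            ((Di * U.conjTranspose * δA).mulVec (fun j => V j i))) := by
  classical
  set N := Di * U.conjTranspose * δA with hN
  set b : Fin n → ℂ := Pi.single i 1 + a with hb
  have hcol : (fun j => V j i) = V.mulVec (Pi.single i 1) := by
    funext j; simp [Matrix.mulVec_single]
  have hvtb : vt = V.mulVec b := by
    rw [hvt, hb, Matrix.mulVec_add, hcol]
  have hδ : U.conjTranspose.mulVec (δA.mulVec vt)
      = fun k => c k * (lamt - lam k) * b k := by
    have h1 : δA.mulVec vt = lamt • vt - A.mulVec vt := by
      rw [eq_sub_iff_add_eq, ← Matrix.add_mulVec, add_comm δA A, heig]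
    have hUAV : U.conjTranspose * A * V = Matrix.diagonal (fun k => c k * lam k) := by
      rw [Matrix.mul_assoc, hAV, ← Matrix.mul_assoc, hbiorth, Matrix.diagonal_mul_diagonal]
    funext k
    rw [h1, Matrix.mulVec_sub, Matrix.mulVec_smul, hvtb]
    simp only [Matrix.mulVec_mulVec]
    rw [← Matrix.mul_assoc, hUAV, hbiorth]
    simp only [Pi.sub_apply, Pi.smul_apply, Matrix.mulVec_diagonal, smul_eq_mul]
    ring
  have hkey : N.mulVec vt = a := by
    funext k
    have : N.mulVec vt k = Di.mulVec (fun k => c k * (lamt - lam k) * b k) k := by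
      rw [← hδ, hN, Matrix.mul_assoc, ← Matrix.mulVec_mulVec, ← Matrix.mulVec_mulVec]
    rw [this, hDi, Matrix.mulVec_diagonal]
    by_cases hk : k = i
    · subst hk; simp [hai]
    · have hck := hc k
      have hl : lamt - lam k ≠ 0 := sub_ne_zero.mpr (hlamt k hk)
      have hbk : b k = a k := by simp [hb, Pi.single_eq_of_ne hk]
      rw [if_neg hk, hbk]
      field_simp
  have hmain : (1 - N * V).mulVec a = N.mulVec (fun j => V j i) := by
    have h2 : a = (N * V).mulVec (Pi.single i 1) + (N * V).mulVec a := by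
      rw [← Matrix.mulVec_add, ← hb, ← Matrix.mulVec_mulVec, ← hvtb, hkey]
    rw [Matrix.sub_mulVec, Matrix.one_mulVec, hcol, Matrix.mulVec_mulVec]
    rw [h2]; ring_nf
    rw [← h2]; abel_nf; rw [neg_one_smul, ← sub_eq_add_neg, sub_eq_iff_eq_add]; exact h2
  refine ⟨hmain, fun hρ => ?_⟩
  have hu : IsUnit (1 - N * V) := by
    have h1 : (1 : ℂ) ∉ spectrum ℂ (N * V) := by
      intro hmem
      have : (‖(1:ℂ)‖₊ : ENNReal) ≤ spectralRadius ℂ (N * V) :=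
        le_iSup₂ (α := ENNReal) (1 : ℂ) hmem
      simp only [nnnorm_one, ENNReal.coe_one] at this
      exact absurd (lt_of_le_of_lt this hρ) (lt_irrefl _)
    have := spectrum.notMem_iff.mp h1
    simpa using this
  refine ⟨hu, ?_⟩
  have hdet : IsUnit (1 - N * V).det := (Matrix.isUnit_iff_isUnit_det _).mp hu
  rw [← hmain, Matrix.mulVec_mulVec, Matrix.nonsing_inv_mul _ hdet, Matrix.one_mulVec]
end

section
/- Let H be a complex inner product space, let a ∈ H with a ≠ 0, let e ∈ H, set r = ‖e‖/‖a‖, and assume r < 1. Then v = a + e is nonzero and ((1 − r)/(1 + r))² ≤ |⟨a, v⟩|² / (‖a‖² ‖v‖²) ≤ 1. -/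
/-- (Inequality (22) of the paper.) In a complex inner product space, if
`a ≠ 0`, `r = ‖e‖/‖a‖ < 1`, and `v = a + e`, then `v ≠ 0` and
`((1 - r)/(1 + r))² ≤ |⟨a, v⟩|² / (‖a‖² ‖v‖²) ≤ 1`. -/
theorem similarity_measure_bounds
    {H : Type*} [NormedAddCommGroup H] [InnerProductSpace ℂ H]
    (a e : H) (ha : a ≠ 0) (hr : ‖e‖ / ‖a‖ < 1) :
    a + e ≠ 0 ∧
    ((1 - ‖e‖ / ‖a‖) / (1 + ‖e‖ / ‖a‖)) ^ 2
      ≤ ‖(inner ℂ a (a + e) : ℂ)‖ ^ 2 / (‖a‖ ^ 2 * ‖a + e‖ ^ 2) ∧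
    ‖(inner ℂ a (a + e) : ℂ)‖ ^ 2 / (‖a‖ ^ 2 * ‖a + e‖ ^ 2) ≤ 1 := by
  have hna : (0:ℝ) < ‖a‖ := norm_pos_iff.mpr ha
  have hlt : ‖e‖ < ‖a‖ := (div_lt_one hna).mp hr
  have hne : (0:ℝ) ≤ ‖e‖ := norm_nonneg e
  have hv1 : ‖a‖ - ‖e‖ ≤ ‖a + e‖ := by
    have := norm_add_le (a + e) (-e)
    simp at this
    linarith [this]
  have hv2 : ‖a + e‖ ≤ ‖a‖ + ‖e‖ := norm_add_le a e
  have hvpos : (0:ℝ) < ‖a + e‖ := by linarith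
  have hv0 : a + e ≠ 0 := by
    intro h
    rw [h, norm_zero] at hvpos
    exact lt_irrefl 0 hvpos
  set L := ‖(inner ℂ a (a + e) : ℂ)‖ with hLdef
  have hCS : L ≤ ‖a‖ * ‖a + e‖ := norm_inner_le_norm a (a + e)
  have hL : ‖a‖ * (‖a‖ - ‖e‖) ≤ L := by
    have h1 : (inner ℂ a (a + e) : ℂ) = inner ℂ a a + inner ℂ a e := inner_add_right a a e
    have h2 : ‖(inner ℂ a a : ℂ)‖ = ‖a‖ * ‖a‖ := by
      rw [@inner_self_eq_norm_sq_to_K ℂ]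
      simp [sq]
    have h3 : ‖(inner ℂ a e : ℂ)‖ ≤ ‖a‖ * ‖e‖ := norm_inner_le_norm a e
    have h4 : ‖(inner ℂ a a : ℂ)‖ - ‖(inner ℂ a e : ℂ)‖ ≤ ‖(inner ℂ a a : ℂ) + (inner ℂ a e : ℂ)‖ := by
      have h5 := norm_add_le ((inner ℂ a a : ℂ) + inner ℂ a e) (-(inner ℂ a e : ℂ))
      rw [add_neg_cancel_right, norm_neg] at h5
      linarith
    rw [hLdef, h1]
    nlinarith
  have hLnn : 0 ≤ L := norm_nonneg _
  have hdpos : (0:ℝ) < ‖a‖ ^ 2 * ‖a + e‖ ^ 2 := by positivity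
  refine ⟨hv0, ?_, ?_⟩
  · rw [le_div_iff₀ hdpos]
    have key : ((‖a‖ - ‖e‖) / (‖a‖ + ‖e‖)) ^ 2 * (‖a‖ ^ 2 * ‖a + e‖ ^ 2) ≤ L ^ 2 := by
      rw [div_pow, div_mul_eq_mul_div, div_le_iff₀ (by positivity)]
      have hL2 : (‖a‖ * (‖a‖ - ‖e‖)) ^ 2 ≤ L ^ 2 :=
        pow_le_pow_left₀ (by nlinarith) hL 2
      have hn2 : ‖a + e‖ ^ 2 ≤ (‖a‖ + ‖e‖) ^ 2 :=
        pow_le_pow_left₀ (norm_nonneg _) hv2 2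
      nlinarith [mul_le_mul_of_nonneg_right hL2 (sq_nonneg ‖a + e‖),
        mul_le_mul_of_nonneg_left hn2 (sq_nonneg L)]
    have heq : (1 - ‖e‖ / ‖a‖) / (1 + ‖e‖ / ‖a‖) = (‖a‖ - ‖e‖) / (‖a‖ + ‖e‖) := by
      field_simp
    rw [heq]
    exact key
  · rw [div_le_one hdpos]
    nlinarith [hCS, hLnn, mul_pos hna hvpos]
end
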